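/- arXiv:2004.05237 — 2 statements merged into one kernel-verified Lean document; each statement's English description precedes it below -/
import Mathlib

section
/- Let α = Σᵢ aᵢ δ_{xᵢ} be a discrete probability measure on ℝ^d and let A be a symmetric positive definite d×d matrix, with α_A = Σᵢ aᵢ δ_{A xᵢ}. Then the transport plan P = diag(a) (sending mass aᵢ from A xᵢ to xᵢ) is optimal for the quadratic cost, so W₂²(α_A, α) = Σᵢ aᵢ |A xᵢ − xᵢ|². -/
/-- For a discrete probability measure `α = Σᵢ aᵢ δ_{xᵢ}` on `ℝ^d` and a symmetric
positive definite linear map `A`, the plan `P = diag(a)` (sending mass `aᵢ` from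
`A xᵢ` to `xᵢ`) is optimal for the quadratic cost, so
`W₂²(α_A, α) = Σᵢ aᵢ |A xᵢ − xᵢ|²`. Optimality is expressed as `IsLeast`:
the value `Σᵢ aᵢ |A xᵢ − xᵢ|²` is attained by a feasible plan and is a lower
bound of the values of all feasible plans. -/
theorem dilation_diag_plan_optimal (d n : ℕ)
    (a : Fin n → ℝ) (ha : ∀ i, 0 < a i) (hsum : ∑ i, a i = 1)
    (x : Fin n → EuclideanSpace ℝ (Fin d))
    (A : EuclideanSpace ℝ (Fin d) →ₗ[ℝ] EuclideanSpace ℝ (Fin d))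
    (hAsym : ∀ u v, (inner ℝ (A u) v : ℝ) = (inner ℝ u (A v) : ℝ))
    (hApos : ∀ u, u ≠ 0 → 0 < (inner ℝ (A u) u : ℝ)) :
    IsLeast {c : ℝ | ∃ P : Fin n → Fin n → ℝ,
        (∀ i j, 0 ≤ P i j) ∧
        (∀ i, ∑ j, P i j = a i) ∧
        (∀ j, ∑ i, P i j = a j) ∧
        c = ∑ i, ∑ j, P i j * ‖A (x i) - x j‖ ^ 2}
      (∑ i, a i * ‖A (x i) - x i‖ ^ 2) := by
  classical
  constructor
  · refine ⟨fun i j => if i = j then a i else 0, ?_, ?_, ?_, ?_⟩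
    · intro i j
      dsimp only
      split
      · exact (ha i).le
      · exact le_rfl
    · intro i; simp
    · intro j; simp
    · simp [ite_mul]
  · rintro c ⟨P, hP0, hrow, hcol, rfl⟩
    have hpsd : ∀ u : EuclideanSpace ℝ (Fin d), 0 ≤ (inner ℝ (A u) u : ℝ) := by
      intro u
      rcases eq_or_ne u 0 with h | h
      · simp [h]
      · exact (hApos u h).le
    have key : ∀ u v : EuclideanSpace ℝ (Fin d),
        2 * (inner ℝ (A u) v : ℝ) ≤ (inner ℝ (A u) u : ℝ) + (inner ℝ (A v) v : ℝ) := by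
      intro u v
      have h0 := hpsd (u - v)
      have h1 : (inner ℝ (A v) u : ℝ) = (inner ℝ (A u) v : ℝ) := by
        rw [hAsym v u, real_inner_comm]
      simp only [map_sub, inner_sub_left, inner_sub_right] at h0
      linarith
    set F : Fin n → ℝ := fun i => ‖A (x i)‖ ^ 2 - (inner ℝ (A (x i)) (x i) : ℝ) with hF
    set G : Fin n → ℝ := fun j => ‖x j‖ ^ 2 - (inner ℝ (A (x j)) (x j) : ℝ) with hG
    have hcii : ∀ i, ‖A (x i) - x i‖ ^ 2 = F i + G i := by
      intro i
      rw [norm_sub_sq_real, hF, hG]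
      ring
    have hcij : ∀ i j, F i + G j ≤ ‖A (x i) - x j‖ ^ 2 := by
      intro i j
      have hk := key (x i) (x j)
      rw [norm_sub_sq_real, hF, hG]
      simp only
      linarith
    have h1 : ∑ i, ∑ j, P i j * F i = ∑ i, a i * F i := by
      refine Finset.sum_congr rfl fun i _ => ?_
      rw [← Finset.sum_mul, hrow]
    have h2 : ∑ i, ∑ j, P i j * G j = ∑ j, a j * G j := by
      rw [Finset.sum_comm]
      refine Finset.sum_congr rfl fun j _ => ?_
      rw [← Finset.sum_mul, hcol]
    calc ∑ i, a i * ‖A (x i) - x i‖ ^ 2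
        = ∑ i, (a i * F i + a i * G i) := by
          refine Finset.sum_congr rfl fun i _ => ?_
          rw [hcii]; ring
      _ = ∑ i, a i * F i + ∑ i, a i * G i := Finset.sum_add_distrib
      _ = ∑ i, ∑ j, P i j * F i + ∑ i, ∑ j, P i j * G j := by rw [h1, h2]
      _ = ∑ i, ∑ j, P i j * (F i + G j) := by
          rw [← Finset.sum_add_distrib]
          refine Finset.sum_congr rfl fun i _ => ?_
          rw [← Finset.sum_add_distrib]
          refine Finset.sum_congr rfl fun j _ => ?_
          ring
      _ ≤ ∑ i, ∑ j, P i j * ‖A (x i) - x j‖ ^ 2 := by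
          refine Finset.sum_le_sum fun i _ => Finset.sum_le_sum fun j _ => ?_
          exact mul_le_mul_of_nonneg_left (hcij i j) (hP0 i j)
end

section
/- Let α, β be discrete probability measures, η a direction, and define the objective J(s) = W₂²(α̂_s, β̂) + (‖a‖₁ − ‖b‖₁)² where α_s is the shift of the positive discrete measure α by sη and hats denote normalization to probability measures. Then J is convex in s. -/
lemma quad_convex (A B C : ℝ) (hA : 0 ≤ A) :
    ConvexOn ℝ Set.univ fun s : ℝ => A * s ^ 2 + B * s + C := by
  refine ⟨convex_univ, ?_⟩
  intro u _ v _ p q hp hq hpq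
  simp only [smul_eq_mul]
  have hq' : q = 1 - p := by linarith
  subst hq'
  nlinarith [mul_nonneg (mul_nonneg hA (mul_nonneg hp hq)) (sq_nonneg (u - v))]

/-- For positive discrete measures `α = Σᵢ aᵢ δ_{xᵢ}` and `β = Σⱼ bⱼ δ_{yⱼ}` and a
direction `η`, the objective `J(s) = W₂²(α̂_s, β̂) + (‖a‖₁ − ‖b‖₁)²` is convex in
the shift size `s`, where hats denote normalization to probability measures and
`α_s` is the shift of `α` by `sη`. -/
theorem mixed_objective_convex_in_shift (d n m : ℕ)
    (a : Fin n → ℝ) (b : Fin m → ℝ)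
    (ha : ∀ i, 0 < a i) (hb : ∀ j, 0 < b j)
    (x : Fin n → EuclideanSpace ℝ (Fin d)) (y : Fin m → EuclideanSpace ℝ (Fin d))
    (η : EuclideanSpace ℝ (Fin d)) :
    ConvexOn ℝ Set.univ (fun s : ℝ =>
      sInf {c : ℝ | ∃ P : Fin n → Fin m → ℝ,
        (∀ i j, 0 ≤ P i j) ∧
        (∀ i, ∑ j, P i j = a i / ∑ i', a i') ∧
        (∀ j, ∑ i, P i j = b j / ∑ j', b j') ∧
        c = ∑ i, ∑ j, P i j * ‖(x i + s • η) - y j‖ ^ 2}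
      + ((∑ i, a i) - ∑ j, b j) ^ 2) := by
  classical
  set K : ℝ := ((∑ i, a i) - ∑ j, b j) ^ 2 with hK
  rcases Nat.eq_zero_or_pos n with hn | hn
  · -- n = 0 : inner cost is always 0, set independent of s
    subst hn
    have : (fun s : ℝ =>
        sInf {c : ℝ | ∃ P : Fin 0 → Fin m → ℝ,
          (∀ i j, 0 ≤ P i j) ∧
          (∀ i, ∑ j, P i j = a i / ∑ i', a i') ∧
          (∀ j, ∑ i, P i j = b j / ∑ j', b j') ∧
          c = ∑ i, ∑ j, P i j * ‖(x i + s • η) - y j‖ ^ 2} + K)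
        = fun _ : ℝ =>
        sInf {c : ℝ | ∃ P : Fin 0 → Fin m → ℝ,
          (∀ i j, 0 ≤ P i j) ∧
          (∀ i, ∑ j, P i j = a i / ∑ i', a i') ∧
          (∀ j, ∑ i, P i j = b j / ∑ j', b j') ∧
          c = 0} + K := by
      funext s; simp
    rw [this]; exact convexOn_const _ convex_univ
  rcases Nat.eq_zero_or_pos m with hm | hm
  · subst hm
    have : (fun s : ℝ =>
        sInf {c : ℝ | ∃ P : Fin n → Fin 0 → ℝ,
          (∀ i j, 0 ≤ P i j) ∧
          (∀ i, ∑ j, P i j = a i / ∑ i', a i') ∧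
          (∀ j, ∑ i, P i j = b j / ∑ j', b j') ∧
          c = ∑ i, ∑ j, P i j * ‖(x i + s • η) - y j‖ ^ 2} + K)
        = fun _ : ℝ =>
        sInf {c : ℝ | ∃ P : Fin n → Fin 0 → ℝ,
          (∀ i j, 0 ≤ P i j) ∧
          (∀ i, ∑ j, P i j = a i / ∑ i', a i') ∧
          (∀ j, ∑ i, P i j = b j / ∑ j', b j') ∧
          c = 0} + K := by
      funext s; simp
    rw [this]; exact convexOn_const _ convex_univ
  -- main case
  have hA : (0:ℝ) < ∑ i', a i' :=
    Finset.sum_pos (fun i _ => ha i) (Finset.univ_nonempty_iff.mpr ⟨⟨0, hn⟩⟩)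
  have hB : (0:ℝ) < ∑ j', b j' :=
    Finset.sum_pos (fun j _ => hb j) (Finset.univ_nonempty_iff.mpr ⟨⟨0, hm⟩⟩)
  set A := ∑ i', a i' with hAdef
  set B := ∑ j', b j' with hBdef
  set t : ℝ := (∑ i, (a i / A) * (inner ℝ (x i) η : ℝ))
      - ∑ j, (b j / B) * (inner ℝ (y j) η : ℝ) with ht
  set S0 : Set ℝ := {c : ℝ | ∃ P : Fin n → Fin m → ℝ,
        (∀ i j, 0 ≤ P i j) ∧
        (∀ i, ∑ j, P i j = a i / A) ∧
        (∀ j, ∑ i, P i j = b j / B) ∧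
        c = ∑ i, ∑ j, P i j * ‖x i - y j‖ ^ 2} with hS0
  -- cost identity
  have cost_eq : ∀ (s : ℝ) (P : Fin n → Fin m → ℝ),
      (∀ i, ∑ j, P i j = a i / A) → (∀ j, ∑ i, P i j = b j / B) →
      ∑ i, ∑ j, P i j * ‖(x i + s • η) - y j‖ ^ 2
        = (∑ i, ∑ j, P i j * ‖x i - y j‖ ^ 2) + (2 * t * s + ‖η‖ ^ 2 * s ^ 2) := by
    intro s P hP2 hP3
    have hmass : ∑ i, ∑ j, P i j = 1 := by
      simp only [hP2]
      rw [← Finset.sum_div, ← hAdef, div_self hA.ne']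
    have hcross : ∑ i, ∑ j, P i j * (inner ℝ (x i - y j) η : ℝ) = t := by
      have : ∀ i j, P i j * (inner ℝ (x i - y j) η : ℝ)
          = P i j * (inner ℝ (x i) η : ℝ) - P i j * (inner ℝ (y j) η : ℝ) := by
        intro i j; rw [inner_sub_left]; ring
      simp only [this, Finset.sum_sub_distrib]
      rw [Finset.sum_comm (f := fun i j => P i j * (inner ℝ (y j) η : ℝ))]
      congr 1
      · refine Finset.sum_congr rfl fun i _ => ?_
        rw [← Finset.sum_mul, hP2]
      · refine Finset.sum_congr rfl fun j _ => ?_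
        rw [← Finset.sum_mul, hP3]
    have hpt : ∀ i j, ‖(x i + s • η) - y j‖ ^ 2
        = ‖x i - y j‖ ^ 2 + 2 * (inner ℝ (x i - y j) η : ℝ) * s + ‖η‖ ^ 2 * s ^ 2 := by
      intro i j
      have h1 : (x i + s • η) - y j = (x i - y j) + s • η := by abel
      rw [h1, norm_add_sq_real, real_inner_smul_right, norm_smul]
      simp [mul_pow]
      ring
    calc ∑ i, ∑ j, P i j * ‖(x i + s • η) - y j‖ ^ 2
        = ∑ i, ∑ j, (P i j * ‖x i - y j‖ ^ 2
            + (2 * s) * (P i j * (inner ℝ (x i - y j) η : ℝ))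
            + (‖η‖ ^ 2 * s ^ 2) * P i j) := by
          refine Finset.sum_congr rfl fun i _ => Finset.sum_congr rfl fun j _ => ?_
          rw [hpt i j]; ring
      _ = (∑ i, ∑ j, P i j * ‖x i - y j‖ ^ 2)
            + (2 * s) * (∑ i, ∑ j, P i j * (inner ℝ (x i - y j) η : ℝ))
            + (‖η‖ ^ 2 * s ^ 2) * (∑ i, ∑ j, P i j) := by
          simp only [Finset.sum_add_distrib, Finset.mul_sum]
      _ = (∑ i, ∑ j, P i j * ‖x i - y j‖ ^ 2) + (2 * t * s + ‖η‖ ^ 2 * s ^ 2) := by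
          rw [hcross, hmass]; ring
  -- the set at shift s is the translate of S0
  have hset : ∀ s : ℝ,
      {c : ℝ | ∃ P : Fin n → Fin m → ℝ,
        (∀ i j, 0 ≤ P i j) ∧
        (∀ i, ∑ j, P i j = a i / A) ∧
        (∀ j, ∑ i, P i j = b j / B) ∧
        c = ∑ i, ∑ j, P i j * ‖(x i + s • η) - y j‖ ^ 2}
      = (fun c => c + (2 * t * s + ‖η‖ ^ 2 * s ^ 2)) '' S0 := by
    intro s
    ext c
    constructor
    · rintro ⟨P, hP1, hP2, hP3, rfl⟩
      exact ⟨∑ i, ∑ j, P i j * ‖x i - y j‖ ^ 2, ⟨P, hP1, hP2, hP3, rfl⟩,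
        (cost_eq s P hP2 hP3).symm⟩
    · rintro ⟨c0, ⟨P, hP1, hP2, hP3, rfl⟩, rfl⟩
      exact ⟨P, hP1, hP2, hP3, (cost_eq s P hP2 hP3).symm⟩
  have hne : S0.Nonempty := by
    refine ⟨_, (fun i j => (a i / A) * (b j / B)), fun i j => ?_, fun i => ?_, fun j => ?_, rfl⟩
    · exact mul_nonneg (div_nonneg (ha i).le hA.le) (div_nonneg (hb j).le hB.le)
    · rw [← Finset.mul_sum, ← Finset.sum_div, ← hBdef, div_self hB.ne', mul_one]
    · rw [← Finset.sum_mul, ← Finset.sum_div, ← hAdef, div_self hA.ne', one_mul]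
  have hbdd : BddBelow S0 := by
    refine ⟨0, ?_⟩
    rintro c ⟨P, hP1, -, -, rfl⟩
    exact Finset.sum_nonneg fun i _ => Finset.sum_nonneg fun j _ =>
      mul_nonneg (hP1 i j) (sq_nonneg _)
  have key : ∀ s : ℝ,
      sInf {c : ℝ | ∃ P : Fin n → Fin m → ℝ,
        (∀ i j, 0 ≤ P i j) ∧
        (∀ i, ∑ j, P i j = a i / A) ∧
        (∀ j, ∑ i, P i j = b j / B) ∧
        c = ∑ i, ∑ j, P i j * ‖(x i + s • η) - y j‖ ^ 2}
      = sInf S0 + (2 * t * s + ‖η‖ ^ 2 * s ^ 2) := by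
    intro s
    rw [hset s]
    have := (OrderIso.addRight (2 * t * s + ‖η‖ ^ 2 * s ^ 2)).map_csInf' hne hbdd
    simpa using this.symm
  have hfun : (fun s : ℝ =>
      sInf {c : ℝ | ∃ P : Fin n → Fin m → ℝ,
        (∀ i j, 0 ≤ P i j) ∧
        (∀ i, ∑ j, P i j = a i / A) ∧
        (∀ j, ∑ i, P i j = b j / B) ∧
        c = ∑ i, ∑ j, P i j * ‖(x i + s • η) - y j‖ ^ 2} + K)
      = fun s : ℝ => ‖η‖ ^ 2 * s ^ 2 + (2 * t) * s + (sInf S0 + K) := by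
    funext s; rw [key s]; ring
  rw [hfun]
  exact quad_convex _ _ _ (sq_nonneg _)
end
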